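/- Let (X, τ, I) be an ideal topological space and f : X → X continuous and I-transitive. If U ⊆ X is open and invariant (f(U) ⊆ U), then U = ∅ or U is I-dense in X. -/

import Mathlib

open Set Function Topology TopologicalSpace

variable {X : Type*}

/-- An ideal of sets: contains ∅, downward closed, closed under finite unions. -/
def IsIdealSet (I : Set (Set X)) : Prop :=
  ∅ ∈ I ∧ (∀ A B : Set X, A ∈ I → B ⊆ A → B ∈ I) ∧
    (∀ A B : Set X, A ∈ I → B ∈ I → A ∪ B ∈ I)

variable [TopologicalSpace X]

/-- I is codense: the only open member of I is ∅. -/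
def Codense (I : Set (Set X)) : Prop := ∀ U : Set X, IsOpen U → U ∈ I → U = ∅

/-- topological transitivity -/
def TopTrans (f : X → X) : Prop :=
  ∀ U V : Set X, IsOpen U → IsOpen V → U.Nonempty → V.Nonempty →
    ∃ n : ℕ, 0 < n ∧ (f^[n] '' U ∩ V).Nonempty

/-- I-transitivity -/
def ITrans (I : Set (Set X)) (f : X → X) : Prop :=
  ∀ U V : Set X, IsOpen U → IsOpen V → U.Nonempty → V.Nonempty →
    ∃ n : ℕ, 0 < n ∧ f^[n] '' U ∩ V ∉ I

/-- Kuratowski local function A* -/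
def locFn (I : Set (Set X)) (A : Set X) : Set X :=
  {x | ∀ U : Set X, IsOpen U → x ∈ U → U ∩ A ∉ I}

/-- ψ(A) = X \ (X \ A)* -/
def psiOp (I : Set (Set X)) (A : Set X) : Set X := (locFn I Aᶜ)ᶜ

/-- A is I-dense: meets every nonempty open set in a set not in I. -/
def IDense (I : Set (Set X)) (A : Set X) : Prop :=
  ∀ O : Set X, IsOpen O → O.Nonempty → A ∩ O ∉ I

/-- I is compatible with the topology (I ∼ τ). -/
def Compat (I : Set (Set X)) : Prop :=
  ∀ A : Set X, (∀ x ∈ A, ∃ O : Set X, IsOpen O ∧ x ∈ O ∧ O ∩ A ∈ I) → A ∈ I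

/-- countable additivity -/
def CountablyAdditive (I : Set (Set X)) : Prop :=
  ∀ g : ℕ → Set X, (∀ n, g n ∈ I) → (⋃ n, g n) ∈ I

/-- preopen set -/
def Preopen (A : Set X) : Prop := A ⊆ interior (closure A)

/-- completely codense ideal -/
def CompletelyCodense (I : Set (Set X)) : Prop :=
  ∀ A : Set X, Preopen A → A ∈ I → A = ∅

theorem stmt8 (I : Set (Set X)) (f : X → X) (hI : IsIdealSet I)
    (hf : Continuous f) (htrans : ITrans I f) (U : Set X) (hU : IsOpen U)
    (hinv : f '' U ⊆ U) : U = ∅ ∨ IDense I U := by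
  rcases eq_empty_or_nonempty U with h | h
  · exact Or.inl h
  · right
    intro O hO hOne
    have hiter : ∀ n : ℕ, f^[n] '' U ⊆ U := by
      intro n
      induction n with
      | zero => simp
      | succ n ih =>
        rw [Function.iterate_succ', Set.image_comp]
        exact (Set.image_mono (f := f) ih).trans hinv
    obtain ⟨n, _, hn⟩ := htrans U O hU hO h hOne
    intro hUO
    exact hn (hI.2.1 _ _ hUO (inter_subset_inter_left _ (hiter n)))
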